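/- Let π¹ and π² be two policies in an episodic MDP and let η ∈ [0,1]. Define the mixture state-action distribution d^mix_h(s,a) = η d^{π¹}_h(s,a) + (1−η) d^{π²}_h(s,a), d^mix_h(s) = Σ_a d^mix_h(s,a), and the induced mixture policy π^mix_h(a|s) = d^mix_h(s,a)/d^mix_h(s) if d^mix_h(s) > 0 and 1/|A| otherwise. Then for all h ∈ [H] and all (s,a) ∈ S × A, d^{π^mix}_h(s,a) = d^mix_h(s,a). -/
import Mathlib


open Finset

/-- An episodic MDP `M = (S, A, P, r, H, ρ)` with finite state space `S`, finite action
space `A`, horizon `H`, initial state distribution `ρ`, non-stationary transitions `P` and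
rewards `r` taking values in `[0,1]`.  Time steps are indexed by `0, 1, …, H-1`. -/
structure MDP (S A : Type) [Fintype S] [Fintype A] where
  H : ℕ
  ρ : S → ℝ
  P : ℕ → S → A → S → ℝ
  r : ℕ → S → A → ℝ
  ρ_nonneg : ∀ s, 0 ≤ ρ s
  ρ_sum : ∑ s, ρ s = 1
  P_nonneg : ∀ h s a s', 0 ≤ P h s a s'
  P_sum : ∀ h s a, ∑ s', P h s a s' = 1
  r_nonneg : ∀ h s a, 0 ≤ r h s a
  r_le_one : ∀ h s a, r h s a ≤ 1

variable {S A : Type} [Fintype S] [Fintype A] [DecidableEq S] [DecidableEq A]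

/-- A (time-dependent, stochastic) policy: `π h s a` is the probability of action `a`
at state `s` in step `h`. -/
def IsPolicy (π : ℕ → S → A → ℝ) : Prop :=
  (∀ h s a, 0 ≤ π h s a) ∧ (∀ h s, ∑ a, π h s a = 1)

/-- A deterministic policy: at each step and state it puts all mass on a single action. -/
def IsDetPolicy (π : ℕ → S → A → ℝ) : Prop :=
  ∃ f : ℕ → S → A, ∀ h s a, π h s a = if a = f h s then 1 else 0

/-- The state distribution `d^π_h(s)` of policy `π` at step `h`. -/
noncomputable def dState (M : MDP S A) (π : ℕ → S → A → ℝ) : ℕ → S → ℝ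
  | 0 => M.ρ
  | h + 1 => fun s' => ∑ s, ∑ a, dState M π h s * π h s a * M.P h s a s'

/-- The state-action distribution `d^π_h(s, a)` of policy `π` at step `h`. -/
noncomputable def dSA (M : MDP S A) (π : ℕ → S → A → ℝ) (h : ℕ) (s : S) (a : A) : ℝ :=
  dState M π h s * π h s a

/-- The policy value `V(π) = E[Σ_{h} r_h(s_h, a_h)] = Σ_h Σ_{(s,a)} d^π_h(s,a) r_h(s,a)`. -/
noncomputable def value (M : MDP S A) (π : ℕ → S → A → ℝ) : ℝ :=
  ∑ h ∈ Finset.range M.H, ∑ s, ∑ a, dSA M π h s a * M.r h s a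

/-- Probability that rolling out policy `π` in MDP `M` produces trajectory `tr`. -/
noncomputable def trajProb (M : MDP S A) (π : ℕ → S → A → ℝ) (tr : Fin M.H → S × A) : ℝ :=
  ∏ h : Fin M.H,
    ((if (h : ℕ) = 0 then M.ρ (tr h).1 else 1) * π h (tr h).1 (tr h).2 *
      (if hh : (h : ℕ) + 1 < M.H then M.P h (tr h).1 (tr h).2 (tr ⟨(h : ℕ) + 1, hh⟩).1 else 1))

/-- A labeled dataset of `N` trajectories of length `H`; the Boolean label records whether
the trajectory was generated by the expert (`true`) or by the behavior policy (`false`).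
The expert dataset `D^E` is the sub-dataset labeled `true`, the supplementary dataset `D^S`
is the sub-dataset labeled `false`, and the union dataset `D^U` is the whole dataset. -/
abbrev Dataset (S A : Type) (H N : ℕ) := Fin N → (Fin H → S × A) × Bool

/-- Probability of observing the labeled dataset `D` under Assumption 1 (each of the `N`
trajectories is independently rolled out from the expert `πE` with probability `η` and
from the behavior policy `πβ` with probability `1 - η`). -/
noncomputable def datasetProb (M : MDP S A) (πE πβ : ℕ → S → A → ℝ) (η : ℝ) {N : ℕ}
    (D : Dataset S A M.H N) : ℝ :=
  ∏ i, (if (D i).2 then η * trajProb M πE (D i).1 else (1 - η) * trajProb M πβ (D i).1)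

/-- Expectation of `f` over the randomness of the dataset collection (Assumption 1). -/
noncomputable def expect (M : MDP S A) (πE πβ : ℕ → S → A → ℝ) (η : ℝ) (N : ℕ)
    (f : Dataset S A M.H N → ℝ) : ℝ :=
  ∑ D : Dataset S A M.H N, datasetProb M πE πβ η D * f D

/-- Whether the step-`h` state-action pair of trajectory `tr` equals `(s, a)`. -/
def hit {H : ℕ} (tr : Fin H → S × A) (h : ℕ) (s : S) (a : A) : Bool :=
  if hh : h < H then decide (tr ⟨h, hh⟩ = (s, a)) else false

/-- `n_h(s, a)`: the number of trajectories of `D` (among those whose label is selected by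
`keep`) whose step-`h` state-action pair is `(s, a)`. -/
def countSA {H N : ℕ} (D : Dataset S A H N) (keep : Bool → Bool) (h : ℕ) (s : S) (a : A) : ℕ :=
  (Finset.univ.filter fun i : Fin N => (keep (D i).2 && hit (D i).1 h s a) = true).card

/-- The behavioral cloning policy determined by counts `n`:
`π_h(a|s) = n_h(s,a)/n_h(s)` if `n_h(s) > 0` and `1/|A|` otherwise. -/
noncomputable def bcFromCounts (n : ℕ → S → A → ℕ) : ℕ → S → A → ℝ := fun h s a =>
  if 0 < ∑ a', n h s a' then (n h s a : ℝ) / (∑ a', (n h s a' : ℝ))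
  else 1 / (Fintype.card A : ℝ)

/-- The behavioral cloning policy of the sub-dataset of `D` selected by `keep`
(`keep = fun b => b` gives BC on the expert dataset `D^E`;
 `keep = fun _ => true` gives BC on the union dataset `D^U`, i.e., NBCU). -/
noncomputable def bcPolicy {H N : ℕ} (D : Dataset S A H N) (keep : Bool → Bool) :
    ℕ → S → A → ℝ :=
  bcFromCounts (fun h s a => countSA D keep h s a)

lemma dState_nonneg (M : MDP S A) (π : ℕ → S → A → ℝ) (hπ : ∀ h s a, 0 ≤ π h s a) :
    ∀ h s, 0 ≤ dState M π h s := by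
  intro h
  induction h with
  | zero => exact M.ρ_nonneg
  | succ h ih =>
    intro s'
    apply Finset.sum_nonneg; intro s _
    apply Finset.sum_nonneg; intro a _
    exact mul_nonneg (mul_nonneg (ih s) (hπ h s a)) (M.P_nonneg h s a s')

lemma sum_dSA (M : MDP S A) (π : ℕ → S → A → ℝ) (hπ : IsPolicy π) (h : ℕ) (s : S) :
    ∑ a, dSA M π h s a = dState M π h s := by
  simp only [dSA, ← Finset.mul_sum, hπ.2 h s, mul_one]

/-- **Mixture policy lemma (state-action distribution).**
For policies `π¹, π²` and `η ∈ [0,1]`, let `d^mix_h(s,a) = η d^{π¹}_h(s,a) + (1−η) d^{π²}_h(s,a)`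
and let `π^mix` be the induced mixture policy
(`π^mix_h(a|s) = d^mix_h(s,a)/d^mix_h(s)` if `d^mix_h(s) > 0`, and `1/|A|` otherwise).
Then `d^{π^mix}_h(s,a) = d^mix_h(s,a)` for all steps `h` within the horizon and all `(s,a)`. -/
theorem mixture_policy_state_action_distribution
    (M : MDP S A) (π1 π2 : ℕ → S → A → ℝ) (h1 : IsPolicy π1) (h2 : IsPolicy π2)
    (η : ℝ) (hη : η ∈ Set.Icc (0 : ℝ) 1)
    (πmix : ℕ → S → A → ℝ)
    (hmix : ∀ h s a, πmix h s a =
      if 0 < ∑ a', (η * dSA M π1 h s a' + (1 - η) * dSA M π2 h s a')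
      then (η * dSA M π1 h s a + (1 - η) * dSA M π2 h s a) /
        (∑ a', (η * dSA M π1 h s a' + (1 - η) * dSA M π2 h s a'))
      else 1 / (Fintype.card A : ℝ)) :
    ∀ h, h < M.H → ∀ s a,
      dSA M πmix h s a = η * dSA M π1 h s a + (1 - η) * dSA M π2 h s a := by
  obtain ⟨hη0, hη1⟩ := hη
  set f : ℕ → S → A → ℝ := fun h s a =>
    η * dSA M π1 h s a + (1 - η) * dSA M π2 h s a with hf
  have hfnn : ∀ h s a, 0 ≤ f h s a := by
    intro h s a
    apply add_nonneg
    · exact mul_nonneg hη0 (mul_nonneg (dState_nonneg M π1 h1.1 h s) (h1.1 h s a))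
    · exact mul_nonneg (by linarith) (mul_nonneg (dState_nonneg M π2 h2.1 h s) (h2.1 h s a))
  have hsumf : ∀ h s, ∑ a, f h s a =
      η * dState M π1 h s + (1 - η) * dState M π2 h s := by
    intro h s
    simp only [hf, Finset.sum_add_distrib, ← Finset.mul_sum, sum_dSA M π1 h1,
      sum_dSA M π2 h2]
  -- key pointwise identity, given the state-distribution identity at step h
  have key : ∀ h s, dState M πmix h s = η * dState M π1 h s + (1 - η) * dState M π2 h s →
      ∀ a, dState M πmix h s * πmix h s a = f h s a := by
    intro h s hD a
    rw [hmix h s a]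
    by_cases hpos : 0 < ∑ a', (η * dSA M π1 h s a' + (1 - η) * dSA M π2 h s a')
    · rw [if_pos hpos]
      have hsum : ∑ a', (η * dSA M π1 h s a' + (1 - η) * dSA M π2 h s a') =
          dState M πmix h s := by rw [hsumf h s, hD]
      rw [hsum]
      have hne : dState M πmix h s ≠ 0 := (hsum ▸ hpos).ne'
      rw [mul_div_cancel₀ _ hne]
    · rw [if_neg hpos]
      have hle : ∑ a', f h s a' ≤ 0 := le_of_not_gt hpos
      have hzero : ∀ a' ∈ Finset.univ, f h s a' = 0 := by
        intro a' _
        have := Finset.sum_nonneg (fun a' (_ : a' ∈ Finset.univ) => hfnn h s a')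
        have hsz : ∑ a', f h s a' = 0 := le_antisymm hle this
        exact (Finset.sum_eq_zero_iff_of_nonneg
          (fun a' _ => hfnn h s a')).mp hsz a' (Finset.mem_univ a')
      have hD0 : dState M πmix h s = 0 := by
        rw [hD, ← hsumf h s, Finset.sum_eq_zero hzero]
      rw [hD0, zero_mul, hzero a (Finset.mem_univ a)]
  have state : ∀ h s, dState M πmix h s =
      η * dState M π1 h s + (1 - η) * dState M π2 h s := by
    intro h
    induction h with
    | zero => intro s; simp [dState]; ring
    | succ h ih =>
      intro s'
      show (∑ s, ∑ a, dState M πmix h s * πmix h s a * M.P h s a s') = _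
      have : ∀ s a, dState M πmix h s * πmix h s a * M.P h s a s' =
          η * (dState M π1 h s * π1 h s a * M.P h s a s') +
          (1 - η) * (dState M π2 h s * π2 h s a * M.P h s a s') := by
        intro s a
        rw [key h s (ih s) a]
        simp only [hf, dSA]; ring
      simp only [this, Finset.sum_add_distrib, ← Finset.mul_sum]
      rfl
  intro h _ s a
  exact key h s (state h s) a
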